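/- Let K be a field of characteristic zero and let g ≥ 1. Let u ∈ K[[t]] be an even power series (all coefficients of odd powers of t vanish) such that u − u(0) has order exactly 2 (its coefficient of t² is nonzero), and let e ∈ K[[t]] be an even power series with nonzero constant coefficient. Let δ := e·(d/dt) be the corresponding derivation of K[[t]]. Then the (2g+1) × (2g+1) matrix over K whose (i,j) entry, for 0 ≤ i, j ≤ 2g, is the constant coefficient of (1/(2i)!)·δ^{2i}(u^j), has nonzero determinant. -/

import Mathlib

open PowerSeries

section Aux

variable {K : Type*} [Field K] [CharZero K]

/-- Constant coefficient of the `n`-th iterate of `δ = e·d/dt` on a series whose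
coefficients below `n` vanish. -/
private lemma const_delta_iter (e : PowerSeries K) :
    ∀ (n : ℕ) (F : PowerSeries K), (∀ m, m < n → coeff m F = 0) →
    constantCoeff ((fun G => e * derivative K G)^[n] F)
      = (n.factorial : K) * (constantCoeff e) ^ n * coeff n F := by
  intro n
  induction n with
  | zero =>
    intro F _
    simp [coeff_zero_eq_constantCoeff]
  | succ n ih =>
    intro F hF
    rw [Function.iterate_succ_apply]
    have key : ∀ m, m < n → coeff m (e * derivative K F) = 0 := by
      intro m hm
      rw [coeff_mul]
      apply Finset.sum_eq_zero
      rintro ⟨a, b⟩ hab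
      have hb : b ≤ m := by
        have := Finset.HasAntidiagonal.mem_antidiagonal.mp hab
        omega
      have : coeff b (derivative K F) = 0 := by
        rw [coeff_derivative, hF (b + 1) (by omega), zero_mul]
      simp [this]
    have key2 : coeff n (e * derivative K F)
        = constantCoeff e * (coeff (n + 1) F * (n + 1)) := by
      rw [coeff_mul]
      rw [Finset.sum_eq_single (0, n)]
      · simp [coeff_derivative, coeff_zero_eq_constantCoeff]
      · rintro ⟨a, b⟩ hab hne
        have hab' := Finset.HasAntidiagonal.mem_antidiagonal.mp hab
        have hb : b < n := by
          rcases Nat.lt_or_ge b n with h | h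
          · exact h
          · exfalso; apply hne
            have : b = n := le_antisymm (by omega) h
            subst this
            have : a = 0 := by omega
            subst this; rfl
        have : coeff b (derivative K F) = 0 := by
          rw [coeff_derivative, hF (b + 1) (by omega), zero_mul]
        simp [this]
      · intro h
        exact absurd (Finset.HasAntidiagonal.mem_antidiagonal.mpr (by omega)) h
    rw [ih _ key, key2, Nat.factorial_succ]
    push_cast
    ring

/-- Coefficients of powers of a series of order `≥ 2`. -/
private lemma coeff_pow_lt (v : PowerSeries K) (h0 : coeff 0 v = 0)
    (h1 : coeff 1 v = 0) (k m : ℕ) (hm : m < 2 * k) : coeff m (v ^ k) = 0 := by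
  have hdvd : (X : PowerSeries K) ^ 2 ∣ v := by
    rw [X_pow_dvd_iff]
    intro m hm
    interval_cases m <;> assumption
  obtain ⟨w, rfl⟩ := hdvd
  rw [mul_pow, ← pow_mul]
  exact X_pow_dvd_iff.mp (Dvd.intro _ rfl) m hm

private lemma coeff_pow_eq (v : PowerSeries K) (h0 : coeff 0 v = 0)
    (h1 : coeff 1 v = 0) (k : ℕ) : coeff (2 * k) (v ^ k) = (coeff 2 v) ^ k := by
  have hdvd : (X : PowerSeries K) ^ 2 ∣ v := by
    rw [X_pow_dvd_iff]
    intro m hm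
    interval_cases m <;> assumption
  obtain ⟨w, rfl⟩ := hdvd
  rw [mul_pow, ← pow_mul]
  have h2 : coeff 2 (X ^ 2 * w) = coeff 0 w := by
    simpa using coeff_X_pow_mul w 2 0
  have hk : coeff (2 * k) (X ^ (2 * k) * w ^ k) = coeff 0 (w ^ k) := by
    simpa using coeff_X_pow_mul (w ^ k) (2 * k) 0
  rw [hk, h2]
  simp [coeff_zero_eq_constantCoeff, map_pow]

end Aux

/-- local power-series content of the Lemma of Section 5.2 of
Balakrishnan–Dogra, "An effective Chabauty–Kim theorem".
Let `K` be a field of characteristic zero and `g ≥ 1`.  Let `u ∈ K[[t]]` be an even power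
series with `u − u(0)` of order exactly `2`, and let `e ∈ K[[t]]` be an even power series
with nonzero constant coefficient.  Let `δ := e·(d/dt)`.  Then the `(2g+1) × (2g+1)` matrix
over `K` whose `(i,j)` entry is the constant coefficient of `(1/(2i)!)·δ^{2i}(u^j)` has
nonzero determinant. -/
theorem weierstrass_wronskian_det_ne_zero (K : Type*) [Field K] [CharZero K]
    (g : ℕ) (hg : 1 ≤ g) (u e : PowerSeries K)
    (hu_even : ∀ m : ℕ, Odd m → PowerSeries.coeff m u = 0)
    (hu_ord : (u - PowerSeries.C (PowerSeries.constantCoeff u)).order = 2)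
    (he_even : ∀ m : ℕ, Odd m → PowerSeries.coeff m e = 0)
    (he0 : PowerSeries.constantCoeff e ≠ 0) :
    Matrix.det (Matrix.of fun i j : Fin (2 * g + 1) =>
      PowerSeries.constantCoeff
        (PowerSeries.C (((2 * (i : ℕ)).factorial : K)⁻¹) *
          (fun G => e * PowerSeries.derivative K G)^[2 * (i : ℕ)] (u ^ (j : ℕ)))) ≠ 0 := by
  classical
  set u₀ : K := constantCoeff u with hu₀
  set v : PowerSeries K := u - C u₀ with hv
  -- order facts about v
  have hord : coeff 2 v ≠ 0 ∧ ∀ i, i < 2 → coeff i v = 0 := by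
    rw [show (2 : ℕ∞) = ((2 : ℕ) : ℕ∞) by norm_cast, order_eq_nat] at hu_ord
    exact hu_ord
  set a : K := coeff 2 v with ha
  have ha0 : a ≠ 0 := hord.1
  have hv0 : coeff 0 v = 0 := hord.2 0 (by omega)
  have hv1 : coeff 1 v = 0 := hord.2 1 (by omega)
  -- δ as a linear endomorphism
  set D : Module.End K (PowerSeries K) :=
    (LinearMap.mulLeft K e).comp (derivative K).toLinearMap with hD
  have hDeq : (fun G => e * derivative K G) = ⇑D := by
    funext G; simp [hD]
  -- binomial expansion of u ^ j
  have hu_eq : u = v + C u₀ := by rw [hv]; ring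
  -- the auxiliary lower-triangular matrices
  set N : Matrix (Fin (2 * g + 1)) (Fin (2 * g + 1)) K := fun i k =>
    (((2 * (i : ℕ)).factorial : K))⁻¹ *
      constantCoeff ((D ^ (2 * (i : ℕ))) (v ^ (k : ℕ))) with hN
  set P : Matrix (Fin (2 * g + 1)) (Fin (2 * g + 1)) K := fun j k =>
    ((j : ℕ).choose (k : ℕ) : K) * u₀ ^ ((j : ℕ) - (k : ℕ)) with hP
  -- the main matrix factors as N * P.transpose
  have hfac : (Matrix.of fun i j : Fin (2 * g + 1) =>
      PowerSeries.constantCoeff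
        (PowerSeries.C (((2 * (i : ℕ)).factorial : K)⁻¹) *
          (fun G => e * PowerSeries.derivative K G)^[2 * (i : ℕ)] (u ^ (j : ℕ))))
      = N * P.transpose := by
    ext i j
    rw [Matrix.mul_apply]
    simp only [Matrix.of_apply, Matrix.transpose_apply]
    rw [hDeq, ← Module.End.pow_apply]
    have hexp : u ^ (j : ℕ)
        = ∑ k ∈ Finset.range ((j : ℕ) + 1),
            (((j : ℕ).choose k : K) * u₀ ^ ((j : ℕ) - k)) • v ^ k := by
      rw [hu_eq, add_pow]
      apply Finset.sum_congr rfl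
      intro k hk
      rw [smul_eq_C_mul, map_mul, map_pow, map_natCast]
      ring
    rw [hexp, map_sum, map_mul, constantCoeff_C, map_sum]
    have hterm : ∀ k, constantCoeff
        ((D ^ (2 * (i : ℕ))) ((((j : ℕ).choose k : K) * u₀ ^ ((j : ℕ) - k)) • v ^ k))
        = (((j : ℕ).choose k : K) * u₀ ^ ((j : ℕ) - k)) *
            constantCoeff ((D ^ (2 * (i : ℕ))) (v ^ k)) := by
      intro k
      rw [map_smul, smul_eq_C_mul, map_mul, constantCoeff_C]
    simp only [hterm]
    -- reindex sum: range (j+1) vs Fin (2g+1)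
    have hjlt : (j : ℕ) + 1 ≤ 2 * g + 1 := j.2
    rw [Finset.mul_sum]
    rw [← Finset.sum_range (f := fun k =>
      (((2 * (i : ℕ)).factorial : K))⁻¹ *
        constantCoeff ((D ^ (2 * (i : ℕ))) (v ^ k)) *
        (((j : ℕ).choose k : K) * u₀ ^ ((j : ℕ) - k)))]
    rw [← Finset.sum_range_add_sum_Ico _ hjlt]
    have hzero : ∑ k ∈ Finset.Ico ((j : ℕ) + 1) (2 * g + 1),
        (((2 * (i : ℕ)).factorial : K))⁻¹ *
          constantCoeff ((D ^ (2 * (i : ℕ))) (v ^ k)) *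
          (((j : ℕ).choose k : K) * u₀ ^ ((j : ℕ) - k)) = 0 := by
      apply Finset.sum_eq_zero
      intro k hk
      have : (j : ℕ).choose k = 0 :=
        Nat.choose_eq_zero_of_lt (by have := (Finset.mem_Ico.mp hk).1; omega)
      simp [this]
    rw [hzero, add_zero]
    apply Finset.sum_congr rfl
    intro k _
    ring
  rw [hfac, Matrix.det_mul, Matrix.det_transpose]
  -- determinant of P is 1
  have hPdet : P.det = 1 := by
    have htri : P.BlockTriangular OrderDual.toDual := by
      intro j k hjk
      have : (j : ℕ) < (k : ℕ) := hjk
      simp [hP, Nat.choose_eq_zero_of_lt this]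
    rw [Matrix.det_of_lowerTriangular P htri]
    apply Finset.prod_eq_one
    intro j _
    simp [hP]
  -- determinant of N
  have hNentry0 : ∀ i k : Fin (2 * g + 1), (i : ℕ) < (k : ℕ) → N i k = 0 := by
    intro i k hik
    have h1 : ∀ m, m < 2 * (i : ℕ) → coeff m (v ^ (k : ℕ)) = 0 := by
      intro m hm
      exact coeff_pow_lt v hv0 hv1 _ m (by omega)
    have h2 : coeff (2 * (i : ℕ)) (v ^ (k : ℕ)) = 0 :=
      coeff_pow_lt v hv0 hv1 _ _ (by omega)
    simp only [hN]
    rw [Module.End.pow_apply, ← hDeq, const_delta_iter e _ _ h1, h2]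
    ring
  have hNdiag : ∀ k : Fin (2 * g + 1),
      N k k = (constantCoeff e) ^ (2 * (k : ℕ)) * a ^ (k : ℕ) := by
    intro k
    have h1 : ∀ m, m < 2 * (k : ℕ) → coeff m (v ^ (k : ℕ)) = 0 := by
      intro m hm
      exact coeff_pow_lt v hv0 hv1 _ m hm
    simp only [hN]
    rw [Module.End.pow_apply, ← hDeq, const_delta_iter e _ _ h1,
      coeff_pow_eq v hv0 hv1, ← ha]
    have hfct : (((2 * (k : ℕ)).factorial : K)) ≠ 0 :=
      Nat.cast_ne_zero.mpr (Nat.factorial_ne_zero _)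
    field_simp
  have hNtri : N.BlockTriangular OrderDual.toDual := by
    intro i k hik
    exact hNentry0 i k hik
  rw [Matrix.det_of_lowerTriangular N hNtri, hPdet, mul_one]
  apply Finset.prod_ne_zero_iff.mpr
  intro k _
  rw [hNdiag k]
  exact mul_ne_zero (pow_ne_zero _ he0) (pow_ne_zero _ ha0)
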